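/- Let $H_k(\mu_0) = N_p(r^k\mu_0,\; v(1-r^{2k})I_p)$ and $H = N_p(0, v\, I_p)$ where $v = (\sigma^2+\tau^2)/n$ and $r = \sigma^2/(\sigma^2+\tau^2) \in (0,1)$. Then the Wasserstein-1 distance (with respect to the $\ell_1$ norm) satisfies $\frac{1}{p}\,d_W[H_k(\mu_0), H] \le \left[\frac{1}{p}\|\mu_0\|_1 + \sqrt{\frac{2(\sigma^2+\tau^2)}{n\pi}}\right] r^k$ for every $k \ge 0$, and $\frac{1}{p} d_W[H_k(\mu_0), H] \ge \frac{1}{p}\|\mu_0\|_1\, r^k$. -/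

import Mathlib

open MeasureTheory ProbabilityTheory

/-- Wasserstein-1 distance (with respect to the `ℓ¹` norm on `Fin p → ℝ`) between two
probability measures, as an infimum over couplings. -/
noncomputable def wasserstein1 (p : ℕ) (P Q : Measure (Fin p → ℝ)) : ℝ :=
  sInf { d : ℝ | ∃ γ : Measure ((Fin p → ℝ) × (Fin p → ℝ)),
    IsProbabilityMeasure γ ∧ γ.map Prod.fst = P ∧ γ.map Prod.snd = Q ∧
      d = ∫ z, ∑ i, |z.1 i - z.2 i| ∂γ }

open MeasureTheory ProbabilityTheory Real Filter Set
open scoped NNReal ENNReal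

namespace WassersteinAux

lemma integrable_dirac' {α E : Type*} [MeasurableSpace α] [MeasurableSingletonClass α]
    [NormedAddCommGroup E] {f : α → E} (hf : StronglyMeasurable f) (a : α) :
    Integrable f (Measure.dirac a) := by
  refine ⟨hf.aestronglyMeasurable, ?_⟩
  rw [HasFiniteIntegral, lintegral_dirac]
  exact ENNReal.coe_lt_top

lemma key_Ioi {b : ℝ} (hb : 0 < b) :
    ∫ t in Ioi (0:ℝ), t * rexp (-b * t ^ 2) = (2 * b)⁻¹ := by
  have hb' : (2 : ℝ) * b ≠ 0 := by positivity
  have hderiv : ∀ x ∈ Ici (0:ℝ),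
      HasDerivAt (fun x : ℝ => -(2 * b)⁻¹ * rexp (-b * x ^ 2)) (x * rexp (-b * x ^ 2)) x := by
    intro x _
    have h1 : HasDerivAt (fun x : ℝ => -b * x ^ 2) (-b * (2 * x ^ 1)) x :=
      (hasDerivAt_pow 2 x).const_mul (-b)
    have h2 := (h1.exp).const_mul (-(2 * b)⁻¹)
    refine h2.congr_deriv ?_
    rw [pow_one, show -(2 * b)⁻¹ * (rexp (-b * x ^ 2) * (-b * (2 * x)))
      = ((2 * b)⁻¹ * (2 * b)) * (x * rexp (-b * x ^ 2)) by ring, inv_mul_cancel₀ hb']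
    ring
  have htend : Tendsto (fun x : ℝ => -(2 * b)⁻¹ * rexp (-b * x ^ 2)) atTop (nhds 0) := by
    have h1 : Tendsto (fun x : ℝ => x ^ 2) atTop atTop := tendsto_pow_atTop two_ne_zero
    have h2 : Tendsto (fun y : ℝ => -b * y) atTop atBot :=
      Tendsto.const_mul_atTop_of_neg (neg_lt_zero.mpr hb) tendsto_id
    have h3 : Tendsto (fun x : ℝ => rexp (-b * x ^ 2)) atTop (nhds 0) :=
      Real.tendsto_exp_atBot.comp (h2.comp h1)
    have := h3.const_mul (-(2 * b)⁻¹)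
    simpa using this
  have := integral_Ioi_of_hasDerivAt_of_tendsto' hderiv
    ((integrable_mul_exp_neg_mul_sq hb).integrableOn) htend
  rw [this]
  norm_num

lemma abs_exp_integral {b : ℝ} (hb : 0 < b) :
    ∫ x : ℝ, |x| * rexp (-b * x ^ 2) = b⁻¹ := by
  have h : ∀ x : ℝ, |x| * rexp (-b * x ^ 2) = |x| * rexp (-b * |x| ^ 2) := by
    intro x; rw [sq_abs]
  rw [funext h, integral_comp_abs (f := fun t => t * rexp (-b * t ^ 2)), key_Ioi hb]
  field_simp

end WassersteinAux

namespace WassersteinAux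

variable {V : ℝ≥0} {m : ℝ}

lemma gauss_integral_density (hV : V ≠ 0) (g : ℝ → ℝ) :
    ∫ x, g x ∂(gaussianReal m V) = ∫ x, gaussianPDFReal m V x * g x := by
  rw [gaussianReal_of_var_ne_zero _ hV]
  have h : (gaussianPDF m V) = fun x => ((gaussianPDFReal m V x).toNNReal : ℝ≥0∞) := rfl
  rw [h, integral_withDensity_eq_integral_smul ((measurable_gaussianPDFReal m V).real_toNNReal) g]
  congr 1; ext x
  rw [NNReal.smul_def, Real.coe_toNNReal _ (gaussianPDFReal_nonneg m V x), smul_eq_mul]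

lemma gauss_integrable_iff (hV : V ≠ 0) (g : ℝ → ℝ) :
    Integrable g (gaussianReal m V) ↔
      Integrable (fun x => gaussianPDFReal m V x * g x) volume := by
  rw [gaussianReal_of_var_ne_zero _ hV]
  have h : (gaussianPDF m V) = fun x => ((gaussianPDFReal m V x).toNNReal : ℝ≥0∞) := rfl
  rw [h, integrable_withDensity_iff_integrable_smul
    ((measurable_gaussianPDFReal m V).real_toNNReal)]
  constructor <;> intro hh <;> [skip; skip] <;>
  · refine hh.congr (Filter.Eventually.of_forall fun x => ?_)
    simp only [NNReal.smul_def, Real.coe_toNNReal _ (gaussianPDFReal_nonneg m V x), smul_eq_mul]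

lemma hexp (hV : V ≠ 0) (x : ℝ) :
    rexp (-(x - 0) ^ 2 / (2 * (V : ℝ))) = rexp (-(2 * (V : ℝ))⁻¹ * x ^ 2) := by
  congr 1; ring

lemma hbpos (hV : V ≠ 0) : 0 < (2 * (V : ℝ))⁻¹ := by
  have : (0 : ℝ) < V := by exact_mod_cast zero_lt_iff.mpr hV
  positivity

lemma pdf0_mul (hV : V ≠ 0) (g : ℝ → ℝ) :
    (fun x => gaussianPDFReal 0 V x * g x)
      = fun x => (Real.sqrt (2 * π * V))⁻¹ * (g x * rexp (-(2 * (V : ℝ))⁻¹ * x ^ 2)) := by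
  funext x
  rw [gaussianPDFReal, hexp hV]
  ring

lemma integrable_id_gauss0 (V : ℝ≥0) : Integrable (fun x => x) (gaussianReal 0 V) := by
  rcases eq_or_ne V 0 with h | h
  · rw [h, gaussianReal_zero_var]
    exact integrable_dirac' stronglyMeasurable_id _
  · rw [gauss_integrable_iff h, pdf0_mul h]
    exact ((integrable_mul_exp_neg_mul_sq (hbpos h)).const_mul _)

lemma pdf0_even (V : ℝ≥0) (x : ℝ) : gaussianPDFReal 0 V (-x) = gaussianPDFReal 0 V x := by
  simp [gaussianPDFReal, neg_sq]

lemma integral_id_gauss0 (V : ℝ≥0) : ∫ x, x ∂gaussianReal 0 V = 0 := by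
  rcases eq_or_ne V 0 with h | h
  · rw [h, gaussianReal_zero_var, integral_dirac]
  · rw [gauss_integral_density h]
    have h1 : ∫ x, gaussianPDFReal 0 V x * x
        = ∫ x, gaussianPDFReal 0 V (-x) * (-x) := by
      exact (integral_neg_eq_self (fun x => gaussianPDFReal 0 V x * x) volume).symm
    have h2 : ∫ x, gaussianPDFReal 0 V (-x) * (-x)
        = - ∫ x, gaussianPDFReal 0 V x * x := by
      rw [← integral_neg]
      congr 1; ext x; rw [pdf0_even]; ring
    have := h1.trans h2
    linarith

lemma integral_abs_gauss0 (V : ℝ≥0) :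
    ∫ x, |x| ∂gaussianReal 0 V = Real.sqrt (2 * (V : ℝ) / π) := by
  rcases eq_or_ne V 0 with h | h
  · rw [h, gaussianReal_zero_var, integral_dirac]
    simp
  · rw [gauss_integral_density h, pdf0_mul h,
      integral_const_mul, abs_exp_integral (hbpos h), inv_inv]
    have hVpos : (0 : ℝ) < V := by exact_mod_cast zero_lt_iff.mpr h
    have h2V : (0 : ℝ) ≤ 2 * (V : ℝ) := by positivity
    have hs : Real.sqrt (2 * (V : ℝ)) ≠ 0 := (Real.sqrt_pos.mpr (by positivity)).ne'
    have hsp : Real.sqrt π ≠ 0 := (Real.sqrt_pos.mpr Real.pi_pos).ne'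
    rw [show (2 : ℝ) * π * (V : ℝ) = π * (2 * V) by ring, Real.sqrt_mul Real.pi_pos.le,
      Real.sqrt_div h2V]
    calc (Real.sqrt π * Real.sqrt (2 * (V : ℝ)))⁻¹ * (2 * (V : ℝ))
        = (Real.sqrt π * Real.sqrt (2 * (V : ℝ)))⁻¹ *
            (Real.sqrt (2 * (V : ℝ)) * Real.sqrt (2 * (V : ℝ))) := by
          rw [Real.mul_self_sqrt h2V]
      _ = Real.sqrt (2 * (V : ℝ)) / Real.sqrt π := by field_simp

end WassersteinAux

namespace WassersteinAux

lemma gauss_shift (m : ℝ) (V : ℝ≥0) :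
    gaussianReal m V = (gaussianReal 0 V).map (· + m) := by
  rw [gaussianReal_map_add_const, zero_add]

lemma integrable_id_gauss (m : ℝ) (V : ℝ≥0) :
    Integrable (fun x => x) (gaussianReal m V) := by
  rw [gauss_shift m V]
  refine (integrable_map_measure aestronglyMeasurable_id
    (measurable_id.add_const m).aemeasurable).mpr ?_
  exact (integrable_id_gauss0 V).add (integrable_const m)

lemma integral_id_gauss (m : ℝ) (V : ℝ≥0) :
    ∫ x, x ∂gaussianReal m V = m := by
  have hmap := integral_map (μ := gaussianReal 0 V) (φ := fun x => x + m)
    ((measurable_id.add_const m).aemeasurable) (f := fun y => y)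
    measurable_id.aestronglyMeasurable
  rw [gauss_shift m V, hmap]
  rw [integral_add (integrable_id_gauss0 V) (integrable_const m), integral_id_gauss0,
    integral_const]
  simp

lemma integrable_abs_gauss0 (V : ℝ≥0) :
    Integrable (fun x => |x|) (gaussianReal 0 V) := (integrable_id_gauss0 V).abs

lemma pi_map_coord {p : ℕ} (μ : Fin p → Measure ℝ) [∀ i, IsProbabilityMeasure (μ i)]
    (f : Fin p → ℝ → ℝ) (hf : ∀ i, Measurable (f i)) :
    (Measure.pi μ).map (fun y i => f i (y i)) = Measure.pi (fun i => (μ i).map (f i)) := by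
  haveI : ∀ i, IsProbabilityMeasure ((μ i).map (f i)) :=
    fun i => Measure.isProbabilityMeasure_map (hf i).aemeasurable
  refine (Measure.pi_eq (μ := fun i => (μ i).map (f i)) fun s hs => ?_).symm
  have hF : Measurable (fun y : Fin p → ℝ => fun i => f i (y i)) :=
    measurable_pi_lambda _ fun i => (hf i).comp (measurable_pi_apply i)
  rw [Measure.map_apply hF (MeasurableSet.univ_pi hs)]
  have h : (fun y i => f i (y i)) ⁻¹' (Set.pi Set.univ s)
      = Set.pi Set.univ (fun i => f i ⁻¹' s i) := by
    ext y; simp [Set.mem_pi]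
  rw [h, Measure.pi_pi]
  exact Finset.prod_congr rfl fun i _ => (Measure.map_apply (hf i) (hs i)).symm

lemma pi_map_eval {p : ℕ} (μ : Fin p → Measure ℝ) [∀ i, IsProbabilityMeasure (μ i)] (i : Fin p) :
    (Measure.pi μ).map (fun y => y i) = μ i := by
  ext s hs
  rw [Measure.map_apply (measurable_pi_apply i) hs]
  have h : (fun y : Fin p → ℝ => y i) ⁻¹' s
      = Set.pi Set.univ (Function.update (fun _ => (Set.univ : Set ℝ)) i s) := by
    ext y
    simp only [Set.mem_preimage, Set.mem_pi, Set.mem_univ, forall_true_left,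
      Function.update_apply]
    constructor
    · intro hy j
      by_cases hj : j = i
      · subst hj; simp [hy]
      · simp [hj]
    · intro hy
      have := hy i
      simpa using this
  rw [h, Measure.pi_pi]
  rw [Finset.prod_eq_single i (fun j _ hj => by simp [Function.update_apply, hj]) (by simp)]
  simp

lemma integral_pi_coord {p : ℕ} (μ : Fin p → Measure ℝ) [∀ i, IsProbabilityMeasure (μ i)]
    (i : Fin p) (g : ℝ → ℝ) (hg : Measurable g) :
    ∫ y, g (y i) ∂Measure.pi μ = ∫ t, g t ∂(μ i) := by
  rw [← pi_map_eval μ i, integral_map (measurable_pi_apply i).aemeasurable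
    hg.aestronglyMeasurable]

lemma integrable_pi_coord {p : ℕ} (μ : Fin p → Measure ℝ) [∀ i, IsProbabilityMeasure (μ i)]
    (i : Fin p) (g : ℝ → ℝ) (hg : Measurable g) (h : Integrable g (μ i)) :
    Integrable (fun y => g (y i)) (Measure.pi μ) := by
  have hmap : (Measure.pi μ).map (fun y => y i) = μ i := pi_map_eval μ i
  have h2 : Integrable g ((Measure.pi μ).map (fun y => y i)) := by rw [hmap]; exact h
  exact (integrable_map_measure hg.aestronglyMeasurable
    (measurable_pi_apply i).aemeasurable).mp h2

end WassersteinAux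

/-- for `H_k(μ₀) = N_p(r^k μ₀, v(1-r^{2k})I_p)` and `H = N_p(0, v I_p)`
with `v = (σ²+τ²)/n` and `r = σ²/(σ²+τ²) ∈ (0,1)`,
`(1/p) d_W[H_k(μ₀), H] ≤ [(1/p)‖μ₀‖₁ + √(2(σ²+τ²)/(nπ))] r^k` and
`(1/p) d_W[H_k(μ₀), H] ≥ (1/p)‖μ₀‖₁ r^k` for every `k ≥ 0`. -/
theorem wasserstein_bounds_hierarchical
    (p n : ℕ) (hp : 1 ≤ p) (hn : 1 ≤ n)
    (σ2 τ2 : ℝ) (hσ : 0 < σ2) (hτ : 0 < τ2)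
    (μ0 : Fin p → ℝ) :
    ∀ k : ℕ,
      (1 / (p : ℝ)) * wasserstein1 p
          (Measure.pi fun i => gaussianReal ((σ2 / (σ2 + τ2)) ^ k * μ0 i)
            (Real.toNNReal ((σ2 + τ2) / (n : ℝ) *
              (1 - (σ2 / (σ2 + τ2)) ^ (2 * k)))))
          (Measure.pi fun _ => gaussianReal 0 (Real.toNNReal ((σ2 + τ2) / (n : ℝ))))
        ≤ ((1 / (p : ℝ)) * ∑ i, |μ0 i| +
            Real.sqrt (2 * (σ2 + τ2) / ((n : ℝ) * Real.pi))) *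
          (σ2 / (σ2 + τ2)) ^ k ∧
      (1 / (p : ℝ)) * (∑ i, |μ0 i|) * (σ2 / (σ2 + τ2)) ^ k
        ≤ (1 / (p : ℝ)) * wasserstein1 p
            (Measure.pi fun i => gaussianReal ((σ2 / (σ2 + τ2)) ^ k * μ0 i)
              (Real.toNNReal ((σ2 + τ2) / (n : ℝ) *
                (1 - (σ2 / (σ2 + τ2)) ^ (2 * k)))))
            (Measure.pi fun _ => gaussianReal 0
              (Real.toNNReal ((σ2 + τ2) / (n : ℝ)))) := by
  classical
  intro k
  have hst : (0:ℝ) < σ2 + τ2 := by linarith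
  have hnp : (0:ℝ) < (n:ℝ) := by exact_mod_cast hn
  have hpp : (0:ℝ) < (p:ℝ) := by exact_mod_cast hp
  set r : ℝ := σ2 / (σ2 + τ2) with hr_def
  have hr0 : 0 < r := div_pos hσ hst
  have hr1 : r < 1 := (div_lt_one hst).mpr (by linarith)
  have hrk0 : 0 < r ^ k := pow_pos hr0 k
  have hrk1 : r ^ k ≤ 1 := pow_le_one₀ hr0.le hr1.le
  set v : ℝ := (σ2 + τ2) / (n:ℝ) with hv_def
  have hv : 0 < v := div_pos hst hnp
  set a : ℝ := 1 - r ^ (2 * k) with ha_def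
  have hr2k : r ^ (2 * k) = (r ^ k) ^ 2 := by rw [pow_mul, sq (r^k)]; ring_nf
  have ha0 : 0 ≤ a := by
    have : r ^ (2*k) ≤ 1 := pow_le_one₀ hr0.le hr1.le
    simp [ha_def]; linarith
  have ha1 : a ≤ 1 := by
    have : 0 < r ^ (2*k) := pow_pos hr0 _
    simp [ha_def]; linarith
  set s : ℝ := Real.sqrt a with hs_def
  have hs0 : 0 ≤ s := Real.sqrt_nonneg a
  have hs_sq : s ^ 2 = a := Real.sq_sqrt ha0
  have hs1 : s ≤ 1 := by nlinarith
  have h1s : 1 - s ≤ r ^ k := by nlinarith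
  set V : ℝ≥0 := Real.toNNReal ((σ2 + τ2) / (n : ℝ)) with hV_def
  set W : ℝ≥0 := Real.toNNReal ((σ2 + τ2) / (n : ℝ) * (1 - r ^ (2 * k))) with hW_def
  have hVcoe : (V : ℝ) = v := Real.coe_toNNReal _ hv.le
  have hWcoe : (W : ℝ) = v * a := by
    rw [hW_def]; exact Real.coe_toNNReal _ (by nlinarith)
  set m : Fin p → ℝ := fun i => r ^ k * μ0 i with hm_def
  set P : Measure (Fin p → ℝ) := Measure.pi fun i => gaussianReal (m i) W with hP_def
  set Q : Measure (Fin p → ℝ) := Measure.pi fun _ => gaussianReal 0 V with hQ_def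
  set E : ℝ := Real.sqrt (2 * (V:ℝ) / Real.pi) with hE_def
  have hE0 : 0 ≤ E := Real.sqrt_nonneg _
  have hE_eq : Real.sqrt (2 * (σ2 + τ2) / ((n : ℝ) * Real.pi)) = E := by
    rw [hE_def, hVcoe, hv_def]
    congr 1
    field_simp
  -- the synchronous coupling
  set T : (Fin p → ℝ) → (Fin p → ℝ) × (Fin p → ℝ) :=
    fun y => (fun i => m i + s * y i, y) with hT_def
  have hT : Measurable T :=
    (measurable_pi_lambda _ fun i =>
      ((measurable_pi_apply i).const_mul s).const_add (m i)).prodMk measurable_id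
  set γ : Measure ((Fin p → ℝ) × (Fin p → ℝ)) := Q.map T with hγ_def
  haveI : IsProbabilityMeasure γ := Measure.isProbabilityMeasure_map hT.aemeasurable
  -- first marginal
  have hmarg1 : ∀ i : Fin p,
      (gaussianReal 0 V).map (fun t => m i + s * t) = gaussianReal (m i) W := by
    intro i
    have hcomp : (fun t : ℝ => m i + s * t) = (fun u : ℝ => m i + u) ∘ (fun t : ℝ => s * t) :=
      rfl
    rw [hcomp, ← Measure.map_map (measurable_const_add (m i)) (measurable_const_mul s)]
    rw [show ((gaussianReal 0 V).map fun t : ℝ => s * t)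
        = gaussianReal (s * 0) (⟨s^2, sq_nonneg _⟩ * V) from gaussianReal_map_const_mul s,
      show (fun u : ℝ => m i + u) = (fun u : ℝ => m i + u) from rfl]
    rw [show (Measure.map (fun u : ℝ => m i + u) (gaussianReal (s * 0) (⟨s^2, sq_nonneg _⟩ * V)))
        = gaussianReal (s * 0 + m i) (⟨s^2, sq_nonneg _⟩ * V) from gaussianReal_map_const_add _]
    congr 1
    · simp
    · ext
      change s ^ 2 * (V : ℝ) = (W : ℝ)
      rw [hVcoe, hWcoe, hs_sq]
      ring
  have hfst : γ.map Prod.fst = P := by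
    rw [hγ_def, Measure.map_map measurable_fst hT]
    have h1 : (Prod.fst ∘ T) = fun y (i : Fin p) => (fun t => m i + s * t) (y i) := rfl
    rw [h1, hQ_def, WassersteinAux.pi_map_coord (fun _ => gaussianReal 0 V)
      (fun i t => m i + s * t) (fun i => by fun_prop)]
    rw [hP_def]
    congr 1
    ext1 i
    exact hmarg1 i
  have hsnd : γ.map Prod.snd = Q := by
    rw [hγ_def, Measure.map_map measurable_snd hT]
    have h1 : (Prod.snd ∘ T) = id := rfl
    rw [h1, Measure.map_id]
  -- continuity of the cost
  have hcost : Continuous (fun z : (Fin p → ℝ) × (Fin p → ℝ) => ∑ i, |z.1 i - z.2 i|) := by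
    refine continuous_finset_sum _ fun i _ => ?_
    exact (((continuous_apply i).comp continuous_fst).sub
      ((continuous_apply i).comp continuous_snd)).abs
  -- value of the coupling cost
  set d0 : ℝ := ∫ z, ∑ i, |z.1 i - z.2 i| ∂γ with hd0_def
  have hint_i : ∀ i : Fin p, Integrable (fun t : ℝ => |m i + (s - 1) * t|) (gaussianReal 0 V) :=
    fun i => ((integrable_const (m i)).add
      ((WassersteinAux.integrable_id_gauss0 V).const_mul (s - 1))).abs
  have hmeas_i : ∀ i : Fin p, Measurable (fun t : ℝ => |m i + (s - 1) * t|) :=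
    fun i => ((measurable_id.const_mul (s-1)).const_add (m i)).abs
  have hint_pi : ∀ i : Fin p,
      Integrable (fun y : Fin p → ℝ => |m i + (s - 1) * y i|) Q :=
    fun i => WassersteinAux.integrable_pi_coord _ i _ (hmeas_i i) (hint_i i)
  have habs_int : ∫ x, |x| ∂gaussianReal 0 V = E := by
    rw [WassersteinAux.integral_abs_gauss0, hE_def]
  have hbound_i : ∀ i : Fin p,
      ∫ t, |m i + (s - 1) * t| ∂gaussianReal 0 V ≤ |m i| + (1 - s) * E := by
    intro i
    have hmono : ∫ t, |m i + (s - 1) * t| ∂gaussianReal 0 V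
        ≤ ∫ t, |m i| + |s - 1| * |t| ∂gaussianReal 0 V := by
      refine integral_mono (hint_i i) ((integrable_const _).add
        ((WassersteinAux.integrable_abs_gauss0 V).const_mul _)) fun t => ?_
      calc |m i + (s - 1) * t| ≤ |m i| + |(s - 1) * t| := abs_add_le _ _
        _ = |m i| + |s - 1| * |t| := by rw [abs_mul (s-1) t]
    have heval : ∫ t, |m i| + |s - 1| * |t| ∂gaussianReal 0 V = |m i| + |s - 1| * E := by
      rw [integral_add (integrable_const _)
        ((WassersteinAux.integrable_abs_gauss0 V).const_mul _),
        integral_const, integral_const_mul, habs_int]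
      simp
    have habs1s : |s - 1| = 1 - s := by rw [abs_of_nonpos (by linarith)]; ring
    rw [heval, habs1s] at hmono
    exact hmono
  have hd0_eq : d0 = ∑ i, ∫ t, |m i + (s - 1) * t| ∂gaussianReal 0 V := by
    rw [hd0_def, hγ_def, integral_map hT.aemeasurable hcost.aestronglyMeasurable]
    have h1 : ∀ y : Fin p → ℝ, ∑ i, |(T y).1 i - (T y).2 i|
        = ∑ i, |m i + (s - 1) * y i| := by
      intro y
      refine Finset.sum_congr rfl fun i _ => ?_
      simp only [hT_def]
      ring_nf
    rw [integral_congr_ae (Filter.Eventually.of_forall h1),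
      integral_finset_sum _ fun i _ => hint_pi i]
    exact Finset.sum_congr rfl fun i _ =>
      WassersteinAux.integral_pi_coord _ i _ (hmeas_i i)
  have hsum_m : ∑ i, |m i| = r ^ k * ∑ i, |μ0 i| := by
    rw [Finset.mul_sum]
    exact Finset.sum_congr rfl fun i _ => by
      rw [hm_def, abs_mul, abs_of_pos hrk0]
  have hd0_le : d0 ≤ r ^ k * ∑ i, |μ0 i| + (p : ℝ) * (r ^ k * E) := by
    rw [hd0_eq, ← hsum_m]
    have h1 : ∑ i, ∫ t, |m i + (s - 1) * t| ∂gaussianReal 0 V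
        ≤ ∑ i : Fin p, (|m i| + (1 - s) * E) :=
      Finset.sum_le_sum fun i _ => hbound_i i
    have h2 : ∑ i : Fin p, (|m i| + (1 - s) * E) = (∑ i, |m i|) + (p:ℝ) * ((1-s) * E) := by
      rw [Finset.sum_add_distrib, Finset.sum_const, Finset.card_univ, Fintype.card_fin,
        nsmul_eq_mul]
    have h3 : (p:ℝ) * ((1-s) * E) ≤ (p:ℝ) * (r ^ k * E) := by
      have : (1-s) * E ≤ r ^ k * E := mul_le_mul_of_nonneg_right h1s hE0
      exact mul_le_mul_of_nonneg_left this hpp.le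
    linarith
  -- the admissible set
  set S : Set ℝ := { d : ℝ | ∃ γ : Measure ((Fin p → ℝ) × (Fin p → ℝ)),
    IsProbabilityMeasure γ ∧ γ.map Prod.fst = P ∧ γ.map Prod.snd = Q ∧
      d = ∫ z, ∑ i, |z.1 i - z.2 i| ∂γ } with hS_def
  have hd0S : d0 ∈ S := ⟨γ, inferInstance, hfst, hsnd, rfl⟩
  have hSbdd : ∀ d ∈ S, (0:ℝ) ≤ d := by
    rintro d ⟨γ', _, _, _, rfl⟩
    exact integral_nonneg fun z => Finset.sum_nonneg fun i _ => abs_nonneg _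
  have hW1 : wasserstein1 p P Q = sInf S := rfl
  -- lower bound on every element of S
  have hlow : ∀ d ∈ S, r ^ k * ∑ i, |μ0 i| ≤ d := by
    rintro d ⟨γ', hγ'p, hfst', hsnd', rfl⟩
    have int1 : ∀ i : Fin p, Integrable (fun z : (Fin p → ℝ) × (Fin p → ℝ) => z.1 i) γ' := by
      intro i
      have e1 : Integrable (fun x : Fin p → ℝ => x i) P :=
        WassersteinAux.integrable_pi_coord _ i _ measurable_id
          (WassersteinAux.integrable_id_gauss (m i) W)
      have e2 : Integrable (fun x : Fin p → ℝ => x i) (γ'.map Prod.fst) := by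
        rw [hfst']; exact e1
      exact (integrable_map_measure (measurable_pi_apply i).aestronglyMeasurable
        measurable_fst.aemeasurable).mp e2
    have int2 : ∀ i : Fin p, Integrable (fun z : (Fin p → ℝ) × (Fin p → ℝ) => z.2 i) γ' := by
      intro i
      have e1 : Integrable (fun x : Fin p → ℝ => x i) Q :=
        WassersteinAux.integrable_pi_coord _ i _ measurable_id
          (WassersteinAux.integrable_id_gauss0 V)
      have e2 : Integrable (fun x : Fin p → ℝ => x i) (γ'.map Prod.snd) := by
        rw [hsnd']; exact e1
      exact (integrable_map_measure (measurable_pi_apply i).aestronglyMeasurable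
        measurable_snd.aemeasurable).mp e2
    have hmean1 : ∀ i : Fin p, ∫ z, z.1 i ∂γ' = m i := by
      intro i
      calc ∫ z, z.1 i ∂γ' = ∫ x, x i ∂(γ'.map Prod.fst) :=
            (integral_map (μ := γ')
              (φ := (Prod.fst : (Fin p → ℝ) × (Fin p → ℝ) → (Fin p → ℝ)))
              (f := fun x : Fin p → ℝ => x i) measurable_fst.aemeasurable
              (measurable_pi_apply i).aestronglyMeasurable).symm
        _ = ∫ x, x i ∂P := by rw [hfst']
        _ = ∫ t, t ∂(gaussianReal (m i) W) :=
            WassersteinAux.integral_pi_coord _ i _ measurable_id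
        _ = m i := WassersteinAux.integral_id_gauss _ _
    have hmean2 : ∀ i : Fin p, ∫ z, z.2 i ∂γ' = 0 := by
      intro i
      calc ∫ z, z.2 i ∂γ' = ∫ x, x i ∂(γ'.map Prod.snd) :=
            (integral_map (μ := γ')
              (φ := (Prod.snd : (Fin p → ℝ) × (Fin p → ℝ) → (Fin p → ℝ)))
              (f := fun x : Fin p → ℝ => x i) measurable_snd.aemeasurable
              (measurable_pi_apply i).aestronglyMeasurable).symm
        _ = ∫ x, x i ∂Q := by rw [hsnd']
        _ = ∫ t, t ∂(gaussianReal 0 V) :=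
            WassersteinAux.integral_pi_coord _ i _ measurable_id
        _ = 0 := WassersteinAux.integral_id_gauss0 _
    have hsplit : ∫ z, ∑ i, |z.1 i - z.2 i| ∂γ'
        = ∑ i, ∫ z, |z.1 i - z.2 i| ∂γ' :=
      integral_finset_sum _ fun i _ => ((int1 i).sub (int2 i)).abs
    have hterm : ∀ i : Fin p, |m i| ≤ ∫ z, |z.1 i - z.2 i| ∂γ' := by
      intro i
      have h1 : ∫ z, (z.1 i - z.2 i) ∂γ' = m i := by
        rw [integral_sub (int1 i) (int2 i), hmean1 i, hmean2 i, sub_zero]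
      have h2 := norm_integral_le_integral_norm (μ := γ')
        (fun z : (Fin p → ℝ) × (Fin p → ℝ) => z.1 i - z.2 i)
      rw [h1, Real.norm_eq_abs] at h2
      refine h2.trans_eq ?_
      exact integral_congr_ae (Filter.Eventually.of_forall fun z => Real.norm_eq_abs _)
    calc r ^ k * ∑ i, |μ0 i| = ∑ i, |m i| := hsum_m.symm
      _ ≤ ∑ i, ∫ z, |z.1 i - z.2 i| ∂γ' := Finset.sum_le_sum fun i _ => hterm i
      _ = ∫ z, ∑ i, |z.1 i - z.2 i| ∂γ' := hsplit.symm
  constructor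
  · -- upper bound
    have hle : wasserstein1 p P Q ≤ d0 := by
      rw [hW1]
      exact csInf_le ⟨0, fun d hd => hSbdd d hd⟩ hd0S
    have hle2 : wasserstein1 p P Q ≤ r ^ k * ∑ i, |μ0 i| + (p:ℝ) * (r ^ k * E) :=
      hle.trans hd0_le
    rw [hE_eq]
    have hfinal : (1 / (p:ℝ)) * (r ^ k * ∑ i, |μ0 i| + (p:ℝ) * (r ^ k * E))
        = ((1 / (p:ℝ)) * ∑ i, |μ0 i| + E) * r ^ k := by
      field_simp
    calc (1 / (p:ℝ)) * wasserstein1 p P Q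
        ≤ (1 / (p:ℝ)) * (r ^ k * ∑ i, |μ0 i| + (p:ℝ) * (r ^ k * E)) :=
          mul_le_mul_of_nonneg_left hle2 (by positivity)
      _ = ((1 / (p:ℝ)) * ∑ i, |μ0 i| + E) * r ^ k := hfinal
  · -- lower bound
    have hge : r ^ k * ∑ i, |μ0 i| ≤ wasserstein1 p P Q := by
      rw [hW1]
      exact le_csInf ⟨d0, hd0S⟩ hlow
    calc (1 / (p:ℝ)) * (∑ i, |μ0 i|) * r ^ k
        = (1 / (p:ℝ)) * (r ^ k * ∑ i, |μ0 i|) := by ring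
      _ ≤ (1 / (p:ℝ)) * wasserstein1 p P Q :=
          mul_le_mul_of_nonneg_left hge (by positivity)
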